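/- If two submodules M and N of (ℤ/dℤ)^n have the same characteristic sequence (i.e., they admit diagonal basis matrices with diagonal entries of the same orders with respect to suitable free bases), then there exists an automorphism of (ℤ/dℤ)^n mapping M onto N. -/

import Mathlib

lemma zmod_dvd_of_addOrderOf_eq {d : ℕ} (hd : d ≠ 0) {x y : ZMod d}
    (h : addOrderOf x = addOrderOf y) : x ∣ y := by
  haveI : NeZero d := ⟨hd⟩
  have hx : ((x.val : ℕ) : ZMod d) = x := ZMod.natCast_rightInverse x
  have hy : ((y.val : ℕ) : ZMod d) = y := ZMod.natCast_rightInverse y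
  have hox : addOrderOf x = d / d.gcd x.val := by
    conv_lhs => rw [← hx]
    exact ZMod.addOrderOf_coe _ hd
  have hoy : addOrderOf y = d / d.gcd y.val := by
    conv_lhs => rw [← hy]
    exact ZMod.addOrderOf_coe _ hd
  have hgcd : d.gcd x.val = d.gcd y.val := by
    rw [hox, hoy] at h
    obtain ⟨k1, hk1⟩ := Nat.gcd_dvd_left d x.val
    obtain ⟨k2, hk2⟩ := Nat.gcd_dvd_left d y.val
    have hg1 : 0 < d.gcd x.val := Nat.pos_of_ne_zero (Nat.gcd_ne_zero_left hd)
    have hg2 : 0 < d.gcd y.val := Nat.pos_of_ne_zero (Nat.gcd_ne_zero_left hd)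
    have e1 : d / d.gcd x.val = k1 := Nat.div_eq_of_eq_mul_right hg1 hk1
    have e2 : d / d.gcd y.val = k2 := Nat.div_eq_of_eq_mul_right hg2 hk2
    rw [e1, e2] at h
    subst h
    have hk1' : 0 < k1 := by
      rcases Nat.eq_zero_or_pos k1 with h0 | h0
      · exfalso; rw [h0, Nat.mul_zero] at hk1; exact hd hk1
      · exact h0
    exact Nat.eq_of_mul_eq_mul_right hk1' (hk1.symm.trans hk2)
  have hxg : x ∣ ((d.gcd x.val : ℕ) : ZMod d) := by
    have hbez := congrArg (fun z : ℤ => (z : ZMod d)) (Nat.gcd_eq_gcd_ab d x.val)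
    push_cast at hbez
    rw [hx] at hbez
    simp only [ZMod.natCast_self, zero_mul, zero_add] at hbez
    exact ⟨_, by rw [hbez, mul_comm]⟩
  have hgy : ((d.gcd x.val : ℕ) : ZMod d) ∣ y := by
    rw [hgcd]
    conv_rhs => rw [← hy]
    exact_mod_cast Nat.cast_dvd_cast (Nat.gcd_dvd_right d y.val)
  exact hxg.trans hgy

/-- If two submodules `M` and `N` of `(ℤ/dℤ)^n` have the same characteristic sequence
(they admit diagonal basis matrices whose diagonal entries have the same additive
orders, with respect to suitable free bases), then some automorphism of `(ℤ/dℤ)^n`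
maps `M` onto `N`. -/
theorem stmt_12 (d n r : ℕ) (hd : 2 ≤ d) (hrn : r ≤ n)
    (M N : Submodule (ZMod d) (Fin n → ZMod d))
    (f g : Module.Basis (Fin n) (ZMod d) (Fin n → ZMod d))
    (b c : Fin r → ZMod d)
    (hb : ∀ i j : Fin r, i ≤ j → b i ∣ b j)
    (hc : ∀ i j : Fin r, i ≤ j → c i ∣ c j)
    (hbM : Submodule.span (ZMod d)
      (Set.range fun i : Fin r => b i • f (Fin.castLE hrn i)) = M)
    (hcN : Submodule.span (ZMod d)
      (Set.range fun i : Fin r => c i • g (Fin.castLE hrn i)) = N)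
    (horder : ∀ i : Fin r, addOrderOf (b i) = addOrderOf (c i)) :
    ∃ e : (Fin n → ZMod d) ≃ₗ[ZMod d] (Fin n → ZMod d),
      Submodule.map (e : (Fin n → ZMod d) →ₗ[ZMod d] (Fin n → ZMod d)) M = N := by
  have hd0 : d ≠ 0 := by omega
  refine ⟨f.equiv g (Equiv.refl _), ?_⟩
  rw [← hbM, ← hcN, Submodule.map_span, ← Set.range_comp]
  simp only [LinearEquiv.coe_coe]
  have heq : ((f.equiv g (Equiv.refl _)) ∘ fun i : Fin r => b i • f (Fin.castLE hrn i))
      = fun i : Fin r => b i • g (Fin.castLE hrn i) := by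
    funext i
    simp [Module.Basis.equiv_apply]
  rw [heq]
  apply le_antisymm
  · rw [Submodule.span_le]
    rintro _ ⟨i, rfl⟩
    obtain ⟨u, hu⟩ := zmod_dvd_of_addOrderOf_eq hd0 (horder i).symm
    show b i • g (Fin.castLE hrn i) ∈ _
    rw [hu, mul_comm, mul_smul]
    exact Submodule.smul_mem _ _ (Submodule.subset_span ⟨i, rfl⟩)
  · rw [Submodule.span_le]
    rintro _ ⟨i, rfl⟩
    obtain ⟨u, hu⟩ := zmod_dvd_of_addOrderOf_eq hd0 (horder i)
    show c i • g (Fin.castLE hrn i) ∈ _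
    rw [hu, mul_comm, mul_smul]
    exact Submodule.smul_mem _ _ (Submodule.subset_span ⟨i, rfl⟩)
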